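/- arXiv:1506.04730 — 2 statements merged into one kernel-verified Lean document; each statement's English description precedes it below -/
import Mathlib

section
/- Curves x, x̂ : I → ℝⁿ form a Ribaucour pair with tangent cross ratio cr if and only if x' is parallel (as a vector in ℝⁿ) to (x̂−x)⁻¹ x̂' (x̂−x), i.e. the reflection of x̂' in the direction x̂−x is a positive or negative multiple of x'; in that case (x̂−x)⁻¹ x̂' (x̂−x) = cr·|x̂−x|²/|x'|² · x'. -/
noncomputable section
open CliffordAlgebra

/-- Euclidean n-space. -/
abbrev E (n : ℕ) := EuclideanSpace ℝ (Fin n)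

/-- The quadratic form of the standard inner product on ℝⁿ. -/
def QE (n : ℕ) : QuadraticForm ℝ (E n) := LinearMap.BilinMap.toQuadraticMap (innerₗ (E n))

/-- The Clifford-algebra inverse of a vector: v⁻¹ = v / |v|². -/
def cinv {n : ℕ} (v : E n) : CliffordAlgebra (QE n) := (QE n v)⁻¹ • ι (QE n) v

lemma QE_ne_zero {n : ℕ} {v : E n} (h : v ≠ 0) : QE n v ≠ 0 := by
  have hv : QE n v = (inner ℝ v v : ℝ) := rfl
  rw [hv, Ne, inner_self_eq_zero]
  exact h

/-- the Ribaucour condition (real tangent cross ratio) holds iff the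
reflection of x̂' in the direction x̂−x is parallel to x', and then
(x̂−x)⁻¹x̂'(x̂−x) = (cr·|x̂−x|²/|x'|²)·x'. -/
theorem ribaucour_iff_reflection_parallel {n : ℕ} (x xh dx dxh : ℝ → E n)
    (hx : ∀ s, HasDerivAt x (dx s) s) (hxh : ∀ s, HasDerivAt xh (dxh s) s)
    (hne : ∀ s, x s ≠ xh s) (himm : ∀ s, dx s ≠ 0) (himm' : ∀ s, dxh s ≠ 0) :
    ∀ s,
      ((∃ c : ℝ, ι (QE n) (dx s) * cinv (x s - xh s) * ι (QE n) (dxh s) * cinv (x s - xh s)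
          = algebraMap ℝ _ c)
        ↔ (∃ r : ℝ, cinv (xh s - x s) * ι (QE n) (dxh s) * ι (QE n) (xh s - x s)
             = r • ι (QE n) (dx s)))
      ∧ (∀ c : ℝ,
          ι (QE n) (dx s) * cinv (x s - xh s) * ι (QE n) (dxh s) * cinv (x s - xh s)
            = algebraMap ℝ _ c →
          cinv (xh s - x s) * ι (QE n) (dxh s) * ι (QE n) (xh s - x s)
            = (c * QE n (xh s - x s) / QE n (dx s)) • ι (QE n) (dx s)) := by
  intro s
  set v : E n := x s - xh s with hvdef
  set u : E n := dx s
  set w : E n := dxh s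
  have hv : v ≠ 0 := sub_ne_zero.mpr (hne s)
  have hu : u ≠ 0 := himm s
  have hq : QE n v ≠ 0 := QE_ne_zero hv
  have hqu : QE n u ≠ 0 := QE_ne_zero hu
  have hneg : xh s - x s = -v := by rw [hvdef]; abel
  have hQneg : QE n (xh s - x s) = QE n v := by rw [hneg, QuadraticMap.map_neg]
  -- the reflection element
  have hA : cinv (xh s - x s) * ι (QE n) w * ι (QE n) (xh s - x s)
      = (QE n v)⁻¹ • (ι (QE n) v * ι (QE n) w * ι (QE n) v) := by
    rw [hneg]
    simp only [cinv, QuadraticMap.map_neg, map_neg, smul_neg, neg_mul, mul_neg, neg_neg,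
      smul_mul_assoc]
  -- the key relation: ι u * A = (QE n v) • cr
  have hrel : ι (QE n) u * (cinv (xh s - x s) * ι (QE n) w * ι (QE n) (xh s - x s))
      = QE n v • (ι (QE n) u * cinv v * ι (QE n) w * cinv v) := by
    rw [hA]
    simp only [cinv, smul_mul_assoc, mul_smul_comm, smul_smul]
    rw [mul_inv_cancel_left₀ hq, mul_assoc, mul_assoc]
    rw [← mul_assoc ((ι (QE n)) u)]
  -- part 2 (also forward direction of the iff)
  have key : ∀ c : ℝ,
      ι (QE n) u * cinv v * ι (QE n) w * cinv v = algebraMap ℝ _ c →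
      cinv (xh s - x s) * ι (QE n) w * ι (QE n) (xh s - x s)
        = (c * QE n (xh s - x s) / QE n u) • ι (QE n) u := by
    intro c hc
    set A := cinv (xh s - x s) * ι (QE n) w * ι (QE n) (xh s - x s) with hAdef
    have h1 : ι (QE n) u * A = (QE n v * c) • (1 : CliffordAlgebra (QE n)) := by
      rw [hrel, hc, Algebra.algebraMap_eq_smul_one, smul_smul]
    have h2 : QE n u • A = (QE n v * c) • ι (QE n) u := by
      have := congrArg (fun z => ι (QE n) u * z) h1
      simp only [mul_smul_comm, mul_one] at this
      rw [← mul_assoc, ι_sq_scalar, Algebra.algebraMap_eq_smul_one, smul_mul_assoc,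
        one_mul] at this
      exact this
    have h3 : A = ((QE n u)⁻¹ * (QE n v * c)) • ι (QE n) u := by
      rw [mul_smul, ← h2, smul_smul, inv_mul_cancel₀ hqu, one_smul]
    rw [h3, hQneg]
    ring_nf
  refine ⟨⟨fun ⟨c, hc⟩ => ⟨c * QE n (xh s - x s) / QE n u, key c hc⟩, ?_⟩, key⟩
  rintro ⟨r, hr⟩
  refine ⟨r * QE n u / QE n v, ?_⟩
  have h1 : QE n v • (ι (QE n) u * cinv v * ι (QE n) w * cinv v)
      = (r * QE n u) • (1 : CliffordAlgebra (QE n)) := by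
    rw [← hrel, hr, mul_smul_comm, ι_sq_scalar, Algebra.algebraMap_eq_smul_one, smul_smul,
      mul_comm r]
  have h2 : ι (QE n) u * cinv v * ι (QE n) w * cinv v
      = ((QE n v)⁻¹ * (r * QE n u)) • (1 : CliffordAlgebra (QE n)) := by
    rw [mul_smul, ← h1, smul_smul, inv_mul_cancel₀ hq, one_smul]
  rw [h2, Algebra.algebraMap_eq_smul_one]
  ring_nf
end
end

section
/- Christoffel–Darboux permutability: let x : (I, ds²/m) → ℝⁿ have Christoffel dual x* (so (x*)' = 1/(m x') as Clifford inverses) and Darboux transform x̂ satisfying the Riccati equation x̂' = μ(x̂−x)(x*)'(x̂−x). Then x̂* := x* + 1/(μ(x̂−x)) satisfies (x̂*)' = 1/(m x̂') (i.e. x̂* is Christoffel dual to x̂) and (x̂*)' = μ(x̂*−x*) x' (x̂*−x*) (i.e. x̂* is a μ-Darboux transform of x*). -/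
noncomputable section
open CliffordAlgebra

variable {n : ℕ}

lemma QE_apply (v : E n) : QE n v = inner ℝ v v := rfl

lemma polar_QE (a b : E n) : QuadraticMap.polar (QE n) a b = 2 * (inner ℝ a b : ℝ) := by
  rw [QE, LinearMap.BilinMap.polar_toQuadraticMap]
  have h1 : innerₗ (E n) a b = (inner ℝ a b : ℝ) := rfl
  have h2 : innerₗ (E n) b a = (inner ℝ b a : ℝ) := rfl
  rw [h1, h2, real_inner_comm b a]; ring

lemma iota_inj : Function.Injective (ι (QE n)) := by
  intro a b h
  have h2 := congrArg (equivExterior (QE n)) h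
  simpa [equivExterior, changeForm_ι, ExteriorAlgebra.ι_inj] using h2

lemma sandwich (a b : E n) :
    ι (QE n) a * ι (QE n) b * ι (QE n) a
      = ι (QE n) ((2 * (inner ℝ a b : ℝ)) • a - (inner ℝ a a : ℝ) • b) := by
  have h1 : ι (QE n) a * ι (QE n) b
      = algebraMap ℝ _ (QuadraticMap.polar (QE n) a b) - ι (QE n) b * ι (QE n) a :=
    eq_sub_iff_add_eq.mpr (ι_mul_ι_add_swap a b)
  rw [h1, sub_mul, mul_assoc, ι_sq_scalar, map_sub, map_smul, map_smul, polar_QE,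
    Algebra.smul_def, Algebra.smul_def (inner ℝ a a : ℝ), QE_apply]
  rw [mul_comm 2 (inner ℝ a b : ℝ), ← Algebra.commutes]


set_option maxHeartbeats 1000000 in
/-- Christoffel–Darboux permutability. If x* is Christoffel dual to x
((x*)' = 1/(m x')) and x̂ is a μ-Darboux transform of x (Riccati equation), then
x̂* := x* + 1/(μ(x̂−x)) is Christoffel dual to x̂ and a μ-Darboux transform of x*. -/
theorem christoffel_darboux_permutability {n : ℕ}
    (x xstar xh : ℝ → E n) (dx dxstar dxh : ℝ → E n)
    (m : ℝ → ℝ) (μ : ℝ) (hμ : μ ≠ 0) (hm : ∀ s, m s ≠ 0)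
    (hx : ∀ s, HasDerivAt x (dx s) s)
    (hxstar : ∀ s, HasDerivAt xstar (dxstar s) s)
    (hxh : ∀ s, HasDerivAt xh (dxh s) s)
    (hne : ∀ s, xh s ≠ x s) (himm : ∀ s, dx s ≠ 0) (himm' : ∀ s, dxh s ≠ 0)
    -- Christoffel duality: (x*)' = 1/(m x'), i.e. (x*)' = x'/(m·|x'|²)
    (hdual : ∀ s, dxstar s = (m s * QE n (dx s))⁻¹ • dx s)
    -- Riccati equation: x̂' = μ(x̂−x)(x*)'(x̂−x)
    (hricc : ∀ s, ι (QE n) (dxh s)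
      = μ • (ι (QE n) (xh s - x s) * ι (QE n) (dxstar s) * ι (QE n) (xh s - x s)))
    (xhstar : ℝ → E n)
    (hdef : ∀ s, xhstar s = xstar s + (μ * QE n (xh s - x s))⁻¹ • (xh s - x s)) :
    ∀ s,
      HasDerivAt xhstar ((m s * QE n (dxh s))⁻¹ • dxh s) s
      ∧ ι (QE n) ((m s * QE n (dxh s))⁻¹ • dxh s)
          = μ • (ι (QE n) (xhstar s - xstar s) * ι (QE n) (dx s)
              * ι (QE n) (xhstar s - xstar s)) := by
  intro s
  set a : E n := dx s with ha
  set v : E n := xh s - x s with hv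
  set w : E n := dxh s with hwdef
  set M : ℝ := m s with hM
  set p : ℝ := inner ℝ a a with hp
  set q : ℝ := inner ℝ v v with hq
  set P : ℝ := inner ℝ v a with hP
  have hva : (inner ℝ a v : ℝ) = P := by rw [hP]; exact (real_inner_comm a v).symm
  have hp0 : p ≠ 0 := fun h => himm s (inner_self_eq_zero.mp h)
  have hq0 : q ≠ 0 := fun h => hne s (sub_eq_zero.mp (inner_self_eq_zero.mp h))
  have hM0 : M ≠ 0 := hm s
  have hdual' : dxstar s = (M * p)⁻¹ • a := by rw [hdual s, QE_apply]
  have hw : w = (μ * (M * p)⁻¹) • ((2 * P) • v - q • a) := by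
    apply iota_inj
    rw [hricc s, sandwich, ← map_smul]
    congr 1
    rw [hdual', ← hv]
    simp only [real_inner_smul_right, smul_smul, smul_sub, ← hq, ← hP]
    match_scalars <;> ring
  have hQw : (inner ℝ w w : ℝ) = (μ * (M * p)⁻¹) ^ 2 * (q ^ 2 * p) := by
    rw [hw]
    simp only [real_inner_smul_left, real_inner_smul_right, inner_sub_left, inner_sub_right,
      ← hq, ← hP, hva, ← hp]
    ring
  have hg : (M * (inner ℝ w w : ℝ))⁻¹ • w = (μ * q ^ 2)⁻¹ • ((2 * P) • v - q • a) := by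
    rw [hQw, hw, smul_smul]
    congr 1
    field_simp
  clear_value a v w M p q P
  constructor
  · -- derivative part
    have hxhstar_eq : xhstar = fun t =>
        xstar t + (μ * (inner ℝ (xh t - x t) (xh t - x t) : ℝ))⁻¹ • (xh t - x t) := by
      funext t; rw [hdef t, QE_apply]
    have hv' : HasDerivAt (fun t => xh t - x t) (w - a) s := by
      rw [hwdef, ha]; exact (hxh s).sub (hx s)
    have hqd : HasDerivAt (fun t => (inner ℝ (xh t - x t) (xh t - x t) : ℝ))
        ((inner ℝ (xh s - x s) (w - a) : ℝ) + inner ℝ (w - a) (xh s - x s)) s :=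
      hv'.inner ℝ hv'
    have hmul := hqd.const_mul μ
    have hne0 : μ * (inner ℝ (xh s - x s) (xh s - x s) : ℝ) ≠ 0 := by
      rw [← hv, ← hq]; exact mul_ne_zero hμ hq0
    have hinv := hmul.inv hne0
    have h2 := hinv.smul hv'
    have htot := (hxstar s).add h2
    have hfun : (xstar + (fun y => μ * inner ℝ (xh y - x y) (xh y - x y))⁻¹ • fun t => xh t - x t)
        = xhstar := by rw [hxhstar_eq]; rfl
    rw [hfun] at htot
    simp only [Pi.inv_apply] at htot
    have hvw : (inner ℝ v w : ℝ) = (μ * (M * p)⁻¹) * (P * q) := by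
      rw [hw]
      simp only [real_inner_smul_right, inner_sub_right, ← hq, ← hP]
      ring
    have hwv : (inner ℝ w v : ℝ) = (μ * (M * p)⁻¹) * (P * q) := by
      rw [real_inner_comm]; exact hvw
    have goal_eq : dxstar s +
        ((μ * (inner ℝ (xh s - x s) (xh s - x s) : ℝ))⁻¹ • (w - a)
          + (-(μ * ((inner ℝ (xh s - x s) (w - a) : ℝ) + inner ℝ (w - a) (xh s - x s))) /
              (μ * (inner ℝ (xh s - x s) (xh s - x s) : ℝ)) ^ 2) • (xh s - x s))
        = (M * QE n w)⁻¹ • w := by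
      have h3 : (inner ℝ v (w - a) : ℝ) = (μ * (M * p)⁻¹) * (P * q) - P := by
        rw [inner_sub_right, hvw, hP]
      have h4 : (inner ℝ (w - a) v : ℝ) = (μ * (M * p)⁻¹) * (P * q) - P := by
        rw [inner_sub_left, hwv, hva]
      rw [QE_apply, ← hv, hg, hdual', ← hq, h3, h4, hw]
      simp only [smul_sub, smul_smul]
      match_scalars <;> (field_simp; ring)
    exact goal_eq ▸ htot
  · -- Darboux part
    have hws : xhstar s - xstar s = (μ * q)⁻¹ • v := by
      rw [hdef s, QE_apply, ← hv, ← hq, add_sub_cancel_left]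
    rw [hws, QE_apply, hg, sandwich, ← map_smul]
    congr 1
    simp only [real_inner_smul_left, real_inner_smul_right, ← hq, ← hP,
      smul_sub, smul_smul]
    match_scalars <;> (field_simp <;> ring)
end
end
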